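/- For the distribution V supported on values 1/(q^t t²) for t = 3, ..., T with tail probabilities P[v ≥ 1/(q^t t²)] = q^t (where 1/4 ≤ q ≤ 1/e), the conditional expectation satisfies E[v | v ≥ 1/(q^t t²)] = Θ(1) · q^{-t} · (1/t - 1/(T+1)); in particular there exist universal constants 0 < c₁ ≤ c₂ such that c₁ · q^{-t}(1/t - 1/(T+1)) ≤ E[v | v ≥ 1/(q^t t²)] ≤ c₂ · q^{-t}(1/t - 1/(T+1)) for all 3 ≤ t ≤ T. -/

import Mathlib

lemma telescope_sum (f : ℕ → ℝ) (t T : ℕ) (h : t ≤ T) :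
    ∑ k ∈ Finset.Icc t T, (f k - f (k + 1)) = f t - f (T + 1) := by
  induction T, h using Nat.le_induction with
  | base => simp
  | succ T hT ih =>
    rw [Finset.sum_Icc_succ_top (by omega), ih]
    ring


/-- For the distribution supported on 1/(q^t t²), t = 3,…,T, with tails
P[v ≥ 1/(q^t t²)] = q^t (so P[v = 1/(q^t t²)] = q^t - q^{t+1} for t < T and q^T for
t = T), the conditional expectation E[v | v ≥ 1/(q^t t²)] is Θ(1)·q^{-t}·(1/t - 1/(T+1)),
with universal constants valid for all q ∈ [1/4, 1/e], T ≥ 4 and 3 ≤ t ≤ T. -/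
theorem tail_conditional_expectation_theta :
    ∃ c₁ c₂ : ℝ, 0 < c₁ ∧ c₁ ≤ c₂ ∧
      ∀ (q : ℝ) (T t : ℕ), 1 / 4 ≤ q → q ≤ 1 / Real.exp 1 → 4 ≤ T → 3 ≤ t → t ≤ T →
        c₁ * (1 / (t : ℝ) - 1 / ((T : ℝ) + 1)) / q ^ t ≤
            (∑ k ∈ Finset.Icc t T,
                (if k = T then q ^ T else q ^ k - q ^ (k + 1)) *
                  (1 / (q ^ k * (k : ℝ) ^ 2))) / q ^ t ∧
          (∑ k ∈ Finset.Icc t T,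
              (if k = T then q ^ T else q ^ k - q ^ (k + 1)) *
                (1 / (q ^ k * (k : ℝ) ^ 2))) / q ^ t ≤
            c₂ * (1 / (t : ℝ) - 1 / ((T : ℝ) + 1)) / q ^ t := by
  refine ⟨1/2, 2, by norm_num, by norm_num, ?_⟩
  intro q T t hq1 hq2 hT ht htT
  have he : (2:ℝ) ≤ Real.exp 1 := by
    have := Real.add_one_le_exp 1; linarith
  have hqhalf : q ≤ 1/2 := by
    refine le_trans hq2 ?_
    rw [div_le_div_iff₀ (by positivity) (by norm_num)]
    linarith
  have hqpos : 0 < q := lt_of_lt_of_le (by norm_num) hq1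
  have hqt : (0:ℝ) < q ^ t := pow_pos hqpos t
  have hsum : (∑ k ∈ Finset.Icc t T,
      (if k = T then q ^ T else q ^ k - q ^ (k + 1)) * (1 / (q ^ k * (k : ℝ) ^ 2)))
      = ∑ k ∈ Finset.Icc t T, (if k = T then 1 else (1 - q)) / (k : ℝ) ^ 2 := by
    apply Finset.sum_congr rfl
    intro k hk
    have hk3 : 3 ≤ k := le_trans ht (Finset.mem_Icc.mp hk).1
    have hkne : (k : ℝ) ≠ 0 := Nat.cast_ne_zero.mpr (by omega)
    have hqk : (q : ℝ) ^ k ≠ 0 := ne_of_gt (pow_pos hqpos k)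
    by_cases h : k = T
    · subst h; simp only [if_pos rfl]
      field_simp
      simp
    · simp only [if_neg h]
      rw [pow_succ]
      field_simp
  rw [hsum]
  -- pointwise bounds
  have hlow : ∀ k ∈ Finset.Icc t T,
      (1/2 : ℝ) * ((1:ℝ)/k - 1/(k+1)) ≤ (if k = T then 1 else (1 - q)) / (k : ℝ) ^ 2 := by
    intro k hk
    have hk3 : 3 ≤ k := le_trans ht (Finset.mem_Icc.mp hk).1
    have hk3' : (3:ℝ) ≤ (k:ℝ) := by exact_mod_cast hk3
    have hc : (1/2 : ℝ) ≤ (if k = T then 1 else (1 - q)) := by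
      split <;> linarith
    have hkpos : (0:ℝ) < (k:ℝ) := by linarith
    have e : (1:ℝ)/k - 1/(k+1) = 1/((k:ℝ)*(k+1)) := by
      field_simp
      ring
    rw [e, mul_one_div, div_le_div_iff₀ (by positivity) (by positivity)]
    nlinarith [mul_le_mul_of_nonneg_right hc (by positivity : (0:ℝ) ≤ (k:ℝ)*((k:ℝ)+1))]
  have hhigh : ∀ k ∈ Finset.Icc t T,
      (if k = T then 1 else (1 - q)) / (k : ℝ) ^ 2 ≤ (2:ℝ) * ((1:ℝ)/k - 1/(k+1)) := by
    intro k hk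
    have hk3 : 3 ≤ k := le_trans ht (Finset.mem_Icc.mp hk).1
    have hk3' : (3:ℝ) ≤ (k:ℝ) := by exact_mod_cast hk3
    have hc : (if k = T then 1 else (1 - q)) ≤ (1:ℝ) := by
      split <;> linarith
    have hkpos : (0:ℝ) < (k:ℝ) := by linarith
    have e : (1:ℝ)/k - 1/(k+1) = 1/((k:ℝ)*(k+1)) := by
      field_simp
      ring
    rw [e, mul_one_div, div_le_div_iff₀ (by positivity) (by positivity)]
    nlinarith [mul_le_mul_of_nonneg_right hc (by positivity : (0:ℝ) ≤ (k:ℝ)*((k:ℝ)+1))]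
  have htel : ∑ k ∈ Finset.Icc t T, ((1:ℝ)/k - 1/(k+1)) = 1/(t:ℝ) - 1/((T:ℝ)+1) := by
    have := telescope_sum (fun n => (1:ℝ)/n) t T htT
    simpa using this
  have hL : (1/2 : ℝ) * (1/(t:ℝ) - 1/((T:ℝ)+1)) ≤
      ∑ k ∈ Finset.Icc t T, (if k = T then 1 else (1 - q)) / (k : ℝ) ^ 2 := by
    calc (1/2 : ℝ) * (1/(t:ℝ) - 1/((T:ℝ)+1))
        = ∑ k ∈ Finset.Icc t T, (1/2 : ℝ) * ((1:ℝ)/k - 1/(k+1)) := by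
          rw [← Finset.mul_sum, htel]
      _ ≤ _ := Finset.sum_le_sum hlow
  have hU : (∑ k ∈ Finset.Icc t T, (if k = T then 1 else (1 - q)) / (k : ℝ) ^ 2) ≤
      (2 : ℝ) * (1/(t:ℝ) - 1/((T:ℝ)+1)) := by
    calc (∑ k ∈ Finset.Icc t T, (if k = T then 1 else (1 - q)) / (k : ℝ) ^ 2)
        ≤ ∑ k ∈ Finset.Icc t T, (2 : ℝ) * ((1:ℝ)/k - 1/(k+1)) := Finset.sum_le_sum hhigh
      _ = (2 : ℝ) * (1/(t:ℝ) - 1/((T:ℝ)+1)) := by rw [← Finset.mul_sum, htel]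
  constructor
  · exact div_le_div_of_nonneg_right hL hqt.le
  · exact div_le_div_of_nonneg_right hU hqt.le
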